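/- Let n ≥ 5, set C₁ = 6n, and let D > 0. There exists η₀ ∈ (0,1), depending only on n and D, with the following property: for every η ∈ (0, η₀), every measurable f : ℝⁿ → ℂ with ∫_{ℝⁿ} |f(x)|^{2n/(n−2)} dx ≤ D, every positive integer K, and all positive reals ℓ₁, …, ℓ_K satisfying ℓ_k ≥ 2·ℓ_{k+1} for 1 ≤ k < K, if for every 1 ≤ k ≤ K one has ∫_{{x : η^{C₁} ℓ_k^{1/2} ≤ ‖x‖ ≤ η^{−27C₁} ℓ_k^{1/2}}} |f(x)|² dx ≥ η^{C₁} ℓ_k, then K ≤ η^{−100C₁}. -/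

import Mathlib

open MeasureTheory Set
open scoped ENNReal NNReal

noncomputable section

abbrev En (n : ℕ) := EuclideanSpace ℝ (Fin n)

/-- key log inequality: `t^56 < 2^t` for `t ≥ 2^30`. -/
lemma aux_two_rpow {t : ℝ} (ht : (2:ℝ)^(30:ℕ) ≤ t) : t ^ (56:ℕ) < (2:ℝ) ^ (t:ℝ) := by
  have ht0 : (0:ℝ) < t := lt_of_lt_of_le (by norm_num) ht
  rw [← Real.rpow_natCast t 56, Real.rpow_def_of_pos ht0,
    Real.rpow_def_of_pos (by norm_num : (0:ℝ) < 2)]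
  apply Real.exp_lt_exp.mpr
  push_cast
  -- goal: log t * 56 < log 2 * t
  have hs0 : (0:ℝ) < Real.sqrt t := Real.sqrt_pos.mpr ht0
  have h1 : Real.log (Real.sqrt t) ≤ Real.sqrt t - 1 := Real.log_le_sub_one_of_pos hs0
  rw [Real.log_sqrt ht0.le] at h1
  have hsq : (2:ℝ)^(15:ℕ) ≤ Real.sqrt t := by
    have h2 := Real.sqrt_le_sqrt ht
    rwa [show Real.sqrt ((2:ℝ)^(30:ℕ)) = 2^(15:ℕ) by
      rw [show ((2:ℝ)^(30:ℕ)) = ((2:ℝ)^(15:ℕ))^2 by norm_num, Real.sqrt_sq (by positivity)]] at h2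
  have hsq' : (32768:ℝ) ≤ Real.sqrt t := by norm_num at hsq; linarith
  have hlog2 : (0.6931471803 : ℝ) < Real.log 2 := Real.log_two_gt_d9
  have htsq : Real.sqrt t * Real.sqrt t = t := Real.mul_self_sqrt ht0.le
  nlinarith [mul_le_mul_of_nonneg_left hsq' hs0.le, mul_lt_mul_of_pos_right hlog2 ht0]

lemma aux_f6 {a η : ℝ} (ha : 0 ≤ a) (hη : 0 < η) (h : η * (a+1) < 1) : a * η ≤ 1 := by
  nlinarith

/-- Energy non-evacuation: there is `η₀ ∈ (0,1)`, depending only on `n ≥ 5` and `D`, such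
that for all `η ∈ (0,η₀)`, any function with `L^{2n/(n-2)}` mass at most `D` can concentrate
`L²` mass `≥ η^{C₁} ℓ_k` on at most `η^{-100C₁}` annuli
`{η^{C₁} ℓ_k^{1/2} ≤ ‖x‖ ≤ η^{-27C₁} ℓ_k^{1/2}}` whose scales decrease geometrically.
Here `C₁ = 6n`. -/
theorem energy_non_evacuation (n : ℕ) (hn : 5 ≤ n) (C₁ : ℕ) (hC₁ : C₁ = 6 * n)
    (D : ℝ) (hD : 0 < D) :
    ∃ η₀ : ℝ, 0 < η₀ ∧ η₀ < 1 ∧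
      ∀ (η : ℝ), 0 < η → η < η₀ →
      ∀ (f : En n → ℂ), Measurable f →
      (∫⁻ x, (‖f x‖₊ : ℝ≥0∞) ^ ((2 * (n : ℝ)) / ((n : ℝ) - 2)) ≤ ENNReal.ofReal D) →
      ∀ (K : ℕ), 1 ≤ K →
      ∀ (ℓ : ℕ → ℝ), (∀ k < K, 0 < ℓ k) →
      (∀ k, k + 1 < K → 2 * ℓ (k + 1) ≤ ℓ k) →
      (∀ k < K,
        ENNReal.ofReal (η ^ C₁ * ℓ k)
          ≤ ∫⁻ x in {x : En n |
              η ^ C₁ * Real.sqrt (ℓ k) ≤ ‖x‖ ∧ ‖x‖ ≤ (η ^ (27 * C₁))⁻¹ * Real.sqrt (ℓ k)},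
              (‖f x‖₊ : ℝ≥0∞) ^ 2) →
      (K : ℝ) ≤ (η ^ (100 * C₁))⁻¹ := by
  classical
  -- numerology
  have hC₁30 : 30 ≤ C₁ := by omega
  have hn5 : (5:ℝ) ≤ (n:ℝ) := by exact_mod_cast hn
  have hn2 : (0:ℝ) < (n:ℝ) - 2 := by linarith
  have hn0 : (0:ℝ) < (n:ℝ) := by linarith
  set p : ℝ := (n:ℝ) / ((n:ℝ) - 2) with hp_def
  have hp1 : 1 < p := by
    rw [hp_def, lt_div_iff₀ hn2]; linarith
  have hp0 : 0 < p := lt_trans one_pos hp1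
  have hp53 : p ≤ 5/3 := by
    rw [hp_def, div_le_iff₀ hn2]; linarith
  have hpq : Real.HolderConjugate p ((n:ℝ)/2) := by
    rw [Real.holderConjugate_iff]; constructor
    · exact hp1
    · rw [hp_def]
      field_simp
      ring
  -- the unit ball volume
  set V : ℝ≥0∞ := volume (Metric.ball (0 : En n) 1) with hV_def
  have hV_ne_top : V ≠ ⊤ := (measure_ball_lt_top).ne
  set e3 : ℝ := 2 / (n:ℝ) * p with he3_def
  have he3_nonneg : 0 ≤ e3 := by positivity
  have hVe3_ne_top : V ^ e3 ≠ ⊤ := ENNReal.rpow_ne_top_of_nonneg he3_nonneg hV_ne_top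
  set Vt : ℝ := (V ^ e3).toReal with hVt_def
  have hVt_nonneg : 0 ≤ Vt := ENNReal.toReal_nonneg
  -- choice of η₀
  refine ⟨min (1/2) (1/(2*Vt*D+1)), ?_, ?_, ?_⟩
  · apply lt_min (by norm_num)
    positivity
  · exact lt_of_le_of_lt (min_le_left _ _) (by norm_num)
  intro η hη hηlt f hf hfD K hK ℓ hℓpos hℓstep hconc
  have hη12 : η ≤ 1/2 := le_of_lt (lt_of_lt_of_le hηlt (min_le_left _ _))
  have hη1 : η ≤ 1 := by linarith
  have hηD : η < 1/(2*Vt*D+1) := lt_of_lt_of_le hηlt (min_le_right _ _)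
  -- notation
  set g : En n → ℝ≥0∞ := fun x => (‖f x‖₊ : ℝ≥0∞) with hg_def
  have hg_meas : Measurable g := hf.nnnorm.coe_nnreal_ennreal
  set e2 : ℝ := 2 * p with he2_def
  set A : ℕ → Set (En n) := fun k => {x : En n |
      η ^ C₁ * Real.sqrt (ℓ k) ≤ ‖x‖ ∧ ‖x‖ ≤ (η ^ (27 * C₁))⁻¹ * Real.sqrt (ℓ k)} with hA_def
  have hA_meas : ∀ k, MeasurableSet (A k) := by
    intro k
    have : A k = (fun x : En n => ‖x‖) ⁻¹'
        (Icc (η ^ C₁ * Real.sqrt (ℓ k)) ((η ^ (27 * C₁))⁻¹ * Real.sqrt (ℓ k))) := rfl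
    rw [this]
    exact measurable_norm measurableSet_Icc
  -- total integral bound with exponent e2
  have hfD' : ∫⁻ x, g x ^ e2 ≤ ENNReal.ofReal D := by
    have : (2 * (n:ℝ)) / ((n:ℝ) - 2) = e2 := by
      rw [he2_def, hp_def]; ring
    rw [← this]; exact hfD
  -- Claim A : per-annulus lower bound on the L^{2p} mass
  have claimA : ∀ k, k < K →
      ENNReal.ofReal (η ^ (55*C₁)) ^ p ≤ V ^ e3 * ∫⁻ x in A k, g x ^ e2 := by
    intro k hk
    have hℓk := hℓpos k hk
    set r : ℝ := (η ^ (27 * C₁))⁻¹ * Real.sqrt (ℓ k) with hr_def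
    have hr0 : 0 < r := by positivity
    -- Hölder
    have hg2 : AEMeasurable (fun x => g x ^ (2:ℝ)) (volume.restrict (A k)) :=
      (hg_meas.pow_const (2:ℝ)).aemeasurable
    have hold := ENNReal.lintegral_mul_le_Lp_mul_Lq (volume.restrict (A k)) hpq hg2
      (aemeasurable_const (b := (1:ℝ≥0∞)))
    simp only [Pi.mul_apply, mul_one, ENNReal.one_rpow, lintegral_one,
      Measure.restrict_apply_univ] at hold
    have hgg : ∀ x : En n, (g x ^ (2:ℝ)) ^ p = g x ^ e2 := by
      intro x; rw [← ENNReal.rpow_mul, he2_def]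
    simp only [hgg] at hold
    -- volume bound
    have hsub : A k ⊆ Metric.closedBall (0 : En n) r := by
      intro x hx
      rw [Metric.mem_closedBall, dist_zero_right]
      exact hx.2
    have hvol : volume (A k) ≤ ENNReal.ofReal (r ^ n) * V := by
      refine (measure_mono hsub).trans_eq ?_
      rw [Measure.addHaar_closedBall volume (0 : En n) hr0.le]
      congr 2
      simp [finrank_euclideanSpace_fin]
    have hq_inv : 1 / ((n:ℝ)/2) = 2 / (n:ℝ) := one_div_div _ _
    have hvol2 : (volume (A k)) ^ (1 / ((n:ℝ)/2)) ≤ ENNReal.ofReal (r ^ 2) * V ^ (2/(n:ℝ)) := by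
      rw [hq_inv]
      calc (volume (A k)) ^ (2/(n:ℝ))
          ≤ (ENNReal.ofReal (r ^ n) * V) ^ (2/(n:ℝ)) :=
            ENNReal.rpow_le_rpow hvol (by positivity)
        _ = ENNReal.ofReal (r ^ n) ^ (2/(n:ℝ)) * V ^ (2/(n:ℝ)) :=
            ENNReal.mul_rpow_of_nonneg _ _ (by positivity)
        _ = ENNReal.ofReal (r ^ 2) * V ^ (2/(n:ℝ)) := by
            congr 1
            rw [ENNReal.ofReal_rpow_of_pos (by positivity)]
            congr 1
            rw [← Real.rpow_natCast r n, ← Real.rpow_mul hr0.le,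
              mul_div_cancel₀ _ (ne_of_gt hn0)]
            norm_num
    -- combine with the concentration hypothesis
    have hcomb : ENNReal.ofReal (η ^ (55*C₁)) * ENNReal.ofReal (r^2) ≤
        ((∫⁻ x in A k, g x ^ e2) ^ (1/p) * V ^ (2/(n:ℝ))) * ENNReal.ofReal (r^2) := by
      have hkey : η ^ C₁ * ℓ k = η ^ (55*C₁) * r ^ 2 := by
        have hpow : (η:ℝ)^(55*C₁) = η^C₁ * (η^(27*C₁))^2 := by
          rw [← pow_mul, ← pow_add]; ring_nf
        have hη27 : ((η:ℝ)^(27*C₁)) ≠ 0 := by positivity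
        rw [hr_def, mul_pow, Real.sq_sqrt hℓk.le, hpow]
        field_simp
      have h0 : ENNReal.ofReal (η ^ C₁ * ℓ k) ≤
          ∫⁻ x in A k, ((‖f x‖₊ : ℝ≥0∞)) ^ (2:ℕ) := hconc k hk
      have h2 : ∫⁻ x in A k, ((‖f x‖₊ : ℝ≥0∞)) ^ (2:ℕ) = ∫⁻ x in A k, g x ^ (2:ℝ) := by
        apply lintegral_congr
        intro x
        rw [hg_def, ← ENNReal.rpow_natCast]
        norm_num
      calc ENNReal.ofReal (η ^ (55*C₁)) * ENNReal.ofReal (r^2)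
          = ENNReal.ofReal (η ^ C₁ * ℓ k) := by
            rw [← ENNReal.ofReal_mul (by positivity), hkey]
        _ ≤ ∫⁻ x in A k, g x ^ (2:ℝ) := by rw [← h2]; exact h0
        _ ≤ (∫⁻ x in A k, g x ^ e2) ^ (1/p) * (volume (A k)) ^ (1 / ((n:ℝ)/2)) := hold
        _ ≤ (∫⁻ x in A k, g x ^ e2) ^ (1/p) * (ENNReal.ofReal (r ^ 2) * V ^ (2/(n:ℝ))) := by
            exact mul_le_mul_right hvol2 _
        _ = ((∫⁻ x in A k, g x ^ e2) ^ (1/p) * V ^ (2/(n:ℝ))) * ENNReal.ofReal (r^2) := by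
            ring
    have hr2_ne0 : ENNReal.ofReal (r^2) ≠ 0 := by
      simp [ENNReal.ofReal_eq_zero, not_le]
      positivity
    have hcancel : ENNReal.ofReal (η ^ (55*C₁)) ≤
        (∫⁻ x in A k, g x ^ e2) ^ (1/p) * V ^ (2/(n:ℝ)) :=
      (ENNReal.mul_le_mul_iff_left hr2_ne0 ENNReal.ofReal_ne_top).mp hcomb
    calc ENNReal.ofReal (η ^ (55*C₁)) ^ p
        ≤ ((∫⁻ x in A k, g x ^ e2) ^ (1/p) * V ^ (2/(n:ℝ))) ^ p :=
          ENNReal.rpow_le_rpow hcancel hp0.le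
      _ = V ^ e3 * (∫⁻ x in A k, g x ^ e2) := by
          rw [ENNReal.mul_rpow_of_nonneg _ _ hp0.le, ← ENNReal.rpow_mul, ← ENNReal.rpow_mul,
            one_div_mul_cancel (ne_of_gt hp0), ENNReal.rpow_one, he3_def, mul_comm]
  -- choice of the spacing m and the number of annuli J
  set m : ℕ := ⌈(η ^ C₁)⁻¹⌉₊ with hm_def
  have hηC₁pos : (0:ℝ) < η ^ C₁ := by positivity
  have hm1 : 1 ≤ m := Nat.one_le_iff_ne_zero.mpr (by
    simp only [hm_def, ne_eq, Nat.ceil_eq_zero, not_le]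
    positivity)
  set J : ℕ := (K - 1)/m + 1 with hJ_def
  have hjmK : ∀ j, j < J → j * m < K := by
    intro j hj
    have hj' : j ≤ (K-1)/m := by omega
    have : j * m ≤ (K-1)/m * m := Nat.mul_le_mul_right m hj'
    have h2 : (K-1)/m * m ≤ K - 1 := Nat.div_mul_le_self _ _
    omega
  have hKJm : K ≤ J * m := by
    have h1 : K - 1 < ((K-1)/m + 1) * m :=
      (Nat.div_lt_iff_lt_mul (by omega : 0 < m)).mp (Nat.lt_succ_self _)
    exact Nat.le_of_pred_lt h1
  -- the key disjointness condition
  have h2m : ((η ^ (56*C₁))⁻¹ : ℝ) < 2 ^ m := by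
    set t : ℝ := (η ^ C₁)⁻¹ with ht_def
    have ht30 : (2:ℝ)^(30:ℕ) ≤ t := by
      rw [ht_def]
      rw [le_inv_comm₀ (by positivity) hηC₁pos]
      calc η ^ C₁ ≤ (1/2) ^ C₁ := pow_le_pow_left₀ hη.le hη12 C₁
        _ ≤ (1/2) ^ 30 := pow_le_pow_of_le_one (by norm_num) (by norm_num) hC₁30
        _ = ((2:ℝ)^(30:ℕ))⁻¹ := by norm_num
    have h1 : ((η ^ (56*C₁))⁻¹ : ℝ) = t ^ (56:ℕ) := by
      rw [ht_def, inv_pow, ← pow_mul, mul_comm C₁ 56]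
    rw [h1]
    calc t ^ (56:ℕ) < (2:ℝ) ^ (t:ℝ) := aux_two_rpow ht30
      _ ≤ (2:ℝ) ^ ((m:ℕ):ℝ) :=
          Real.rpow_le_rpow_of_exponent_le one_le_two (Nat.le_ceil _)
      _ = 2 ^ m := Real.rpow_natCast 2 m
  -- decay of the scales
  have hdecay : ∀ b a, a + b < K → 2^b * ℓ (a+b) ≤ ℓ a := by
    intro b
    induction b with
    | zero => intro a h; simp
    | succ b ih =>
      intro a h
      have h1 : 2 * ℓ (a+b+1) ≤ ℓ (a+b) := hℓstep (a+b) (by omega)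
      have h2 := ih a (by omega)
      have h3 : (0:ℝ) ≤ 2^b := by positivity
      calc (2:ℝ)^(b+1) * ℓ (a+(b+1)) = 2^b * (2 * ℓ (a+b+1)) := by ring
        _ ≤ 2^b * ℓ (a+b) := mul_le_mul_of_nonneg_left h1 h3
        _ ≤ ℓ a := h2
  -- disjointness of the chosen annuli
  have hdisj : (↑(Finset.range J) : Set ℕ).PairwiseDisjoint (fun j => A (j * m)) := by
    have key : ∀ j1 j2, j1 < j2 → j2 < J → Disjoint (A (j1*m)) (A (j2*m)) := by
      intro j1 j2 hlt hj2
      have ha : j1 * m < K := hjmK _ (lt_trans hlt hj2)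
      have hb : j2 * m < K := hjmK _ hj2
      have hℓa := hℓpos _ ha
      have hℓb := hℓpos _ hb
      have hstep : j1 * m + m ≤ j2 * m := by
        calc j1 * m + m = (j1 + 1) * m := by ring
          _ ≤ j2 * m := Nat.mul_le_mul_right m hlt
      set d : ℕ := j2 * m - j1 * m with hd_def
      have hd : j1 * m + d = j2 * m := by omega
      have hmd : m ≤ d := by omega
      have hdec : 2^d * ℓ (j2 * m) ≤ ℓ (j1 * m) := by
        have := hdecay d (j1 * m) (by omega)
        rwa [hd] at this
      have h2md : (2:ℝ)^m ≤ 2^d := pow_le_pow_right₀ one_le_two hmd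
      have hba : (2:ℝ)^m * ℓ (j2*m) ≤ ℓ (j1*m) := by
        calc (2:ℝ)^m * ℓ (j2*m) ≤ 2^d * ℓ (j2*m) :=
            mul_le_mul_of_nonneg_right h2md hℓb.le
          _ ≤ ℓ (j1*m) := hdec
      -- the separation of radii
      have hsep : (η ^ (27*C₁))⁻¹ * Real.sqrt (ℓ (j2*m)) < η ^ C₁ * Real.sqrt (ℓ (j1*m)) := by
        apply lt_of_pow_lt_pow_left₀ 2 (by positivity)
        rw [mul_pow, mul_pow, Real.sq_sqrt hℓa.le, Real.sq_sqrt hℓb.le]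
        set X : ℝ := η ^ C₁ with hX_def
        have hX0 : (0:ℝ) < X := hηC₁pos
        have h27 : (η:ℝ) ^ (27*C₁) = X ^ 27 := by rw [hX_def, ← pow_mul, mul_comm C₁ 27]
        have h56 : (η:ℝ) ^ (56*C₁) = X ^ 56 := by rw [hX_def, ← pow_mul, mul_comm C₁ 56]
        rw [h27, inv_pow]
        rw [h56] at h2m
        have hgoal : ℓ (j2*m) < X ^ 56 * ℓ (j1*m) := by
          have hc : 1 < X^56 * 2^m := by
            have h := mul_lt_mul_of_pos_left h2m (show (0:ℝ) < X^56 by positivity)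
            rwa [mul_inv_cancel₀ (by positivity : ((X:ℝ)^56) ≠ 0)] at h
          calc ℓ (j2*m) = ℓ (j2*m) * 1 := (mul_one _).symm
            _ < ℓ (j2*m) * (X^56 * 2^m) := by exact mul_lt_mul_of_pos_left hc hℓb
            _ = X^56 * (2^m * ℓ (j2*m)) := by ring
            _ ≤ X^56 * ℓ (j1*m) := mul_le_mul_of_nonneg_left hba (by positivity)
        rw [inv_mul_lt_iff₀ (by positivity : (0:ℝ) < (X^27)^2)]
        calc ℓ (j2*m) < X ^ 56 * ℓ (j1*m) := hgoal
          _ = (X^27)^2 * (X^2 * ℓ (j1*m)) := by ring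
      rw [Set.disjoint_left]
      intro x hx2 hx1
      rw [hA_def] at hx1 hx2
      have := hx1.2
      have := hx2.1
      linarith [hx1.1, hx2.2]
    intro j1 h1 j2 h2 hne
    simp only [Finset.coe_range, Set.mem_Iio] at h1 h2
    rcases hne.lt_or_gt with h | h
    · exact key j1 j2 h h2
    · exact (key j2 j1 h h1).symm
  -- sum over the disjoint annuli
  set μ' : Measure (En n) := volume.withDensity (fun x => g x ^ e2) with hμ'_def
  have hμ'A : ∀ k, μ' (A k) = ∫⁻ x in A k, g x ^ e2 := fun k =>
    withDensity_apply _ (hA_meas k)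
  have hsum_le : ∑ j ∈ Finset.range J, μ' (A (j*m)) ≤ ENNReal.ofReal D := by
    rw [← measure_biUnion_finset hdisj (fun i _ => hA_meas _)]
    refine le_trans (measure_mono (Set.subset_univ _)) ?_
    rw [hμ'_def, withDensity_apply _ MeasurableSet.univ, Measure.restrict_univ]
    exact hfD'
  have hJE : (J:ℝ≥0∞) * ENNReal.ofReal (η ^ (55*C₁)) ^ p ≤ V ^ e3 * ENNReal.ofReal D := by
    calc (J:ℝ≥0∞) * ENNReal.ofReal (η ^ (55*C₁)) ^ p
        = ∑ _j ∈ Finset.range J, ENNReal.ofReal (η ^ (55*C₁)) ^ p := by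
          rw [Finset.sum_const, Finset.card_range, nsmul_eq_mul]
      _ ≤ ∑ j ∈ Finset.range J, V ^ e3 * μ' (A (j*m)) := by
          refine Finset.sum_le_sum fun j hj => ?_
          rw [hμ'A]
          exact claimA (j*m) (hjmK j (Finset.mem_range.mp hj))
      _ = V ^ e3 * ∑ j ∈ Finset.range J, μ' (A (j*m)) := by rw [Finset.mul_sum]
      _ ≤ V ^ e3 * ENNReal.ofReal D := mul_le_mul_right hsum_le _
  -- convert to a real inequality
  set Y : ℝ := (η ^ (55*C₁)) ^ (p:ℝ) with hY_def
  have hY_nonneg : 0 ≤ Y := by rw [hY_def]; positivity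
  have hreal : (J:ℝ) * Y ≤ Vt * D := by
    have hne : V ^ e3 * ENNReal.ofReal D ≠ ⊤ :=
      ENNReal.mul_ne_top hVe3_ne_top ENNReal.ofReal_ne_top
    have := ENNReal.toReal_mono hne hJE
    rwa [ENNReal.toReal_mul, ENNReal.toReal_mul, ENNReal.toReal_natCast,
      ← ENNReal.toReal_rpow, ENNReal.toReal_ofReal (by positivity),
      ENNReal.toReal_ofReal hD.le, ← hVt_def, ← hY_def] at this
  clear_value Vt
  -- final counting
  have f1 : (K:ℝ) ≤ (J:ℝ) * (m:ℝ) := by exact_mod_cast hKJm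
  have f3 : (η:ℝ) ^ (92*C₁) ≤ Y := by
    rw [hY_def, ← Real.rpow_natCast η (55*C₁), ← Real.rpow_natCast η (92*C₁),
      ← Real.rpow_mul hη.le]
    apply Real.rpow_le_rpow_of_exponent_ge hη hη1
    have hC₁0 : (0:ℝ) ≤ (C₁:ℝ) := Nat.cast_nonneg _
    push_cast
    nlinarith [mul_le_mul_of_nonneg_left hp53 hC₁0]
  have f4 : (m:ℝ) * η ^ C₁ ≤ 2 := by
    have hm_le : (m:ℝ) ≤ (η ^ C₁)⁻¹ + 1 := le_of_lt (Nat.ceil_lt_add_one (by positivity))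
    have hinv1 : (1:ℝ) ≤ (η ^ C₁)⁻¹ := by
      rw [le_inv_comm₀ one_pos hηC₁pos]
      simpa using pow_le_one₀ hη.le hη1
    calc (m:ℝ) * η ^ C₁ ≤ ((η ^ C₁)⁻¹ + (η ^ C₁)⁻¹) * η ^ C₁ := by
          apply mul_le_mul_of_nonneg_right _ hηC₁pos.le
          linarith
      _ = 2 := by field_simp; ring
  have f5 : (η:ℝ) ^ (7*C₁) ≤ η := by
    calc (η:ℝ) ^ (7*C₁) ≤ η ^ 1 := pow_le_pow_of_le_one hη.le hη1 (by omega)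
      _ = η := pow_one η
  have f6 : Vt * D * 2 * η ≤ 1 := by
    have hpos : (0:ℝ) < 2*Vt*D+1 := by positivity
    have h2 : η * (2*Vt*D+1) < 1 := by
      have h3 := mul_lt_mul_of_pos_right hηD hpos
      rwa [one_div_mul_cancel (ne_of_gt hpos)] at h3
    have h4 := aux_f6 (show (0:ℝ) ≤ 2*Vt*D by positivity) hη h2
    calc Vt*D*2*η = (2*Vt*D)*η := by ring
      _ ≤ 1 := h4
  have hdecomp : (η:ℝ) ^ (100*C₁) = η ^ (92*C₁) * η ^ C₁ * η ^ (7*C₁) := by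
    rw [← pow_add, ← pow_add]; ring_nf
  have hmain : (K:ℝ) * η ^ (100*C₁) ≤ 1 := by
    calc (K:ℝ) * η ^ (100*C₁) ≤ ((J:ℝ) * m) * η ^ (100*C₁) := by
          apply mul_le_mul_of_nonneg_right f1 (by positivity)
      _ = ((J:ℝ) * η ^ (92*C₁)) * ((m:ℝ) * η ^ C₁) * η ^ (7*C₁) := by
          rw [hdecomp]; ring
      _ ≤ ((J:ℝ) * Y) * 2 * η := by
          have hJ0 : (0:ℝ) ≤ (J:ℝ) := Nat.cast_nonneg _
          have hm0 : (0:ℝ) ≤ (m:ℝ) := Nat.cast_nonneg _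
          apply mul_le_mul _ f5 (by positivity) (by positivity)
          apply mul_le_mul (mul_le_mul_of_nonneg_left f3 hJ0) f4 (by positivity)
          positivity
      _ ≤ (Vt * D) * 2 * η := by
          apply mul_le_mul_of_nonneg_right _ hη.le
          apply mul_le_mul_of_nonneg_right hreal (by norm_num)
      _ ≤ 1 := f6
  have h100 : (0:ℝ) < η ^ (100*C₁) := by positivity
  calc (K:ℝ) = (K:ℝ) * η ^ (100*C₁) * (η ^ (100*C₁))⁻¹ := by field_simp
    _ ≤ 1 * (η ^ (100*C₁))⁻¹ := by
        apply mul_le_mul_of_nonneg_right hmain (by positivity)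
    _ = (η ^ (100*C₁))⁻¹ := one_mul _

end
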